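/- Let k be a field of characteristic 0 and let σ = (x_0x_1, g) in R = k[x_0,x_1,x_2,x_3], where g is homogeneous of degree 3 depending only on x_2, x_3 and such that ∂g/∂x_2 and ∂g/∂x_3 have no common factor of positive degree. Then the kernel of the Jacobian matrix of σ is a free R-module of rank 2 generated by ν_1 = (−x_0, x_1, 0, 0) and ν_2 = (0, 0, ∂g/∂x_3, −∂g/∂x_2), of degrees 1 and 2 respectively. -/

import Mathlib

open MvPolynomial

private lemma aux_pderiv_homog {k : Type*} [CommSemiring k] {σ : Type*} {n : ℕ}
    {g : MvPolynomial σ k} (hg : g.IsHomogeneous (n+1)) (i : σ) :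
    (pderiv i g).IsHomogeneous n := by
  classical
  rw [g.as_sum, map_sum]
  refine IsHomogeneous.sum _ _ _ fun d hd => ?_
  rw [pderiv_monomial]
  rcases Nat.eq_zero_or_pos (d i) with h | h
  · simp only [h, Nat.cast_zero, mul_zero, map_zero]
    exact isHomogeneous_zero _ _ _
  · refine isHomogeneous_monomial _ ?_
    have hdeg : (Finsupp.weight (1 : σ → ℕ)) d = n + 1 := hg (mem_support_iff.1 hd)
    have hle : Finsupp.single i 1 ≤ d := Finsupp.single_le_iff.2 h
    have h2 := congrArg (Finsupp.weight (1 : σ → ℕ)) (tsub_add_cancel_of_le hle)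
    rw [map_add, hdeg] at h2
    have hsing : (Finsupp.weight (1 : σ → ℕ)) (Finsupp.single i 1) = 1 := by
      simp [Finsupp.weight_apply, Finsupp.sum_single_index]
    rw [hsing] at h2
    show Finsupp.degree _ = n
    rw [Finsupp.degree_eq_weight_one]
    change (Finsupp.weight (1 : σ → ℕ)) _ = n
    omega

private lemma aux_not_unit {k : Type*} [Field k] {σ : Type*} {q : MvPolynomial σ k} {n : ℕ}
    (hq : q.IsHomogeneous n) (hn : n ≠ 0) : ¬ IsUnit q := by
  intro h
  have hc : constantCoeff q = 0 := by
    rw [constantCoeff_eq]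
    exact hq.coeff_eq_zero (by simp [map_zero]; omega)
  have := h.map (constantCoeff : MvPolynomial σ k →+* k)
  rw [hc] at this
  exact not_isUnit_zero this

private lemma aux_prime_X0 {k : Type*} [Field k] :
    Prime (X 0 : MvPolynomial (Fin 4) k) := by
  rw [← MulEquiv.prime_iff (MvPolynomial.finSuccEquiv k 3).toMulEquiv]
  have h : (MvPolynomial.finSuccEquiv k 3).toMulEquiv (X 0) = Polynomial.X :=
    finSuccEquiv_X_zero
  rw [h]
  exact Polynomial.prime_X

/-- For `σ = (x₀x₁, g)` with `g` a cubic in `x₂,x₃` only whose partials are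
coprime, the kernel of the Jacobian matrix is free of rank 2, generated by
`ν₁ = (−x₀, x₁, 0, 0)` (degree 1) and `ν₂ = (0, 0, ∂g/∂x₃, −∂g/∂x₂)` (degree 2). -/
theorem stmt_10 {k : Type*} [Field k] [CharZero k]
    (g : MvPolynomial (Fin 4) k) (hg : g.IsHomogeneous 3)
    (h0 : pderiv 0 g = 0) (h1 : pderiv 1 g = 0)
    (hcop : ∀ p : MvPolynomial (Fin 4) k,
      p ∣ pderiv 2 g → p ∣ pderiv 3 g → IsUnit p) :
    LinearMap.ker
        ((Matrix.of
          ![![X 1, X 0, 0, 0],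
            ![0, 0, pderiv 2 g, pderiv 3 g]] :
          Matrix (Fin 2) (Fin 4) (MvPolynomial (Fin 4) k)).mulVecLin) =
      Submodule.span (MvPolynomial (Fin 4) k)
        ({![-X 0, X 1, 0, 0], ![0, 0, pderiv 3 g, -(pderiv 2 g)]} :
          Set (Fin 4 → MvPolynomial (Fin 4) k)) ∧
    LinearIndependent (MvPolynomial (Fin 4) k)
      ![(![-X 0, X 1, 0, 0] : Fin 4 → MvPolynomial (Fin 4) k),
        ![0, 0, pderiv 3 g, -(pderiv 2 g)]] := by
  have hg2 : (pderiv 2 g).IsHomogeneous 2 := aux_pderiv_homog hg 2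
  have hg3 : (pderiv 3 g).IsHomogeneous 2 := aux_pderiv_homog hg 3
  have hXu : ¬ IsUnit (X 0 : MvPolynomial (Fin 4) k) :=
    aux_not_unit (isHomogeneous_X _ _) one_ne_zero
  have h2ne : pderiv 2 g ≠ 0 := by
    intro h2
    rcases eq_or_ne (pderiv 3 g) 0 with h3 | h3
    · exact hXu (hcop (X 0) (h2 ▸ dvd_zero _) (h3 ▸ dvd_zero _))
    · exact aux_not_unit hg3 two_ne_zero (hcop _ (h2 ▸ dvd_zero _) dvd_rfl)
  have h3ne : pderiv 3 g ≠ 0 := by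
    intro h3
    exact aux_not_unit hg2 two_ne_zero (hcop _ dvd_rfl (h3 ▸ dvd_zero _))
  have hX0 : (X 0 : MvPolynomial (Fin 4) k) ≠ 0 := X_ne_zero 0
  constructor
  · apply le_antisymm
    · intro v hv
      simp only [LinearMap.mem_ker, Matrix.mulVecLin_apply] at hv
      have e1 : X 1 * v 0 + X 0 * v 1 = 0 := by
        have := congrFun hv 0
        simpa [Matrix.mulVec, dotProduct, Fin.sum_univ_four] using this
      have e2 : pderiv 2 g * v 2 + pderiv 3 g * v 3 = 0 := by
        have := congrFun hv 1
        simpa [Matrix.mulVec, dotProduct, Fin.sum_univ_four] using this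
      have hX01 : ¬ (X 0 : MvPolynomial (Fin 4) k) ∣ X 1 := by
        rw [X_dvd_X]; decide
      obtain ⟨a, ha⟩ : (X 0 : MvPolynomial (Fin 4) k) ∣ v 0 := by
        refine (aux_prime_X0.dvd_or_dvd ⟨-v 1, ?_⟩).resolve_left hX01
        linear_combination e1
      have hv1 : v 1 = -(X 1 * a) := by
        apply mul_left_cancel₀ hX0
        linear_combination e1 - X 1 * ha
      obtain ⟨b, hb⟩ : pderiv 3 g ∣ v 2 := by
        refine IsRelPrime.dvd_of_dvd_mul_left (x := pderiv 3 g) (y := pderiv 2 g)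
          (fun p hp3 hp2 => hcop p hp2 hp3) ⟨-v 3, ?_⟩
        linear_combination e2
      have hv3 : v 3 = -(pderiv 2 g * b) := by
        apply mul_left_cancel₀ h3ne
        linear_combination e2 - pderiv 2 g * hb
      rw [Submodule.mem_span_pair]
      refine ⟨-a, b, ?_⟩
      funext i
      fin_cases i <;> simp
      · linear_combination -ha
      · linear_combination -hv1
      · linear_combination -hb
      · linear_combination -hv3
    · rw [Submodule.span_le]
      rintro x (rfl | rfl) <;>
      · simp only [SetLike.mem_coe, LinearMap.mem_ker, Matrix.mulVecLin_apply]
        funext i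
        fin_cases i <;>
          simp [Matrix.mulVec, dotProduct, Fin.sum_univ_four] <;> ring
  · rw [Fintype.linearIndependent_iff]
    intro c hc
    have h00 := congrFun hc 0
    have h33 := congrFun hc 3
    simp only [Fin.sum_univ_two, Pi.add_apply, Pi.smul_apply, smul_eq_mul,
      Matrix.cons_val_zero, Matrix.cons_val_one, Matrix.head_cons, Matrix.cons_val_three,
      Matrix.tail_cons, Pi.zero_apply, mul_zero, add_zero, mul_neg, zero_add,
      neg_eq_zero, mul_eq_zero] at h00 h33
    intro i
    fin_cases i
    · exact h00.resolve_right hX0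
    · exact h33.resolve_right h2ne
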